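/- For n ≥ m-1, the Ehrhart polynomials of the partial permutohedra satisfy the recurrence ehr_{P(m,n)}(t) = (mt+nt-t+1)·ehr_{P(m-1,n)}(t) - (m-1)(nt+t/2+3/2)·t·ehr_{P(m-2,n)}(t) + (m-1)(m-2)·t^2·ehr_{P(m-3,n)}(t)/2, valid whenever all four polytopes involved satisfy the condition n ≥ (number of coordinates) - 1, where the Ehrhart polynomials are given by ehr_{P(k,n)}(t) = k! t^k [z^k] sqrt(1-z) e^{(n+1/2+1/t)z - z^2/(4t)}. -/

import Mathlib

open PowerSeries Finset


/-- Composition `f(g)` of formal power series (`g` with zero constant term). -/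
noncomputable def psComp (f g : PowerSeries ℚ) : PowerSeries ℚ :=
  PowerSeries.mk fun k => ∑ i ∈ Finset.range (k + 1),
    PowerSeries.coeff (R := ℚ) i f * PowerSeries.coeff (R := ℚ) k (g ^ i)

/-- The expression `E_k(t) = k! t^k [z^k] √(1-z) e^{(n+1/2+1/t)z - z²/(4t)}`, which for
`n ≥ k-1` is the Ehrhart polynomial of `P(k,n)` evaluated at `t`; here `S` is the power
series `√(1-z)` and the exponential denotes composition of `e^z` with
`(n+1/2+1/t)z - z²/(4t)`. -/
noncomputable def ehrExpr (S : PowerSeries ℚ) (n : ℕ) (t : ℚ) (k : ℕ) : ℚ :=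
  k.factorial * t ^ k *
    PowerSeries.coeff (R := ℚ) k (S * psComp (PowerSeries.exp ℚ)
      (PowerSeries.C (R := ℚ) ((n : ℚ) + 1/2 + 1/t) * PowerSeries.X -
        PowerSeries.C (R := ℚ) (1 / (4 * t)) * PowerSeries.X ^ 2))


noncomputable def gg (a b : ℚ) : ℚ⟦X⟧ := C (R := ℚ) a * X - C (R := ℚ) b * X ^ 2

noncomputable def EE (a b : ℚ) : ℚ⟦X⟧ := psComp (PowerSeries.exp ℚ) (gg a b)

lemma coeff_gg_pow_of_lt (a b : ℚ) {k j : ℕ} (h : k < j) : coeff (R := ℚ) k (gg a b ^ j) = 0 := by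
  refine X_pow_dvd_iff.mp (pow_dvd_pow_of_dvd ⟨C (R := ℚ) a - C (R := ℚ) b * X, by rw [gg]; ring⟩ j) k h

lemma dgg (a b : ℚ) : d⁄dX ℚ (gg a b) = C (R := ℚ) a - C (R := ℚ) (2*b) * X := by
  rw [gg, Derivation.map_sub]
  rw [Derivation.leibniz, Derivation.leibniz, Derivation.leibniz_pow]
  simp only [derivative_X, derivative_C, smul_eq_mul, smul_zero, mul_zero, mul_one, add_zero,
    nsmul_eq_mul, pow_one]
  rw [show (2:ℚ)*b = b*2 from mul_comm _ _, map_mul, map_ofNat]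
  ring

lemma coeff_EE (a b : ℚ) (k : ℕ) : coeff (R := ℚ) k (EE a b)
    = ∑ i ∈ range (k+1), (1 / i.factorial : ℚ) * coeff (R := ℚ) k (gg a b ^ i) := by
  simp [EE, psComp, coeff_exp]

lemma expandDg (a b : ℚ) (f : ℚ⟦X⟧) (k : ℕ) :
    coeff (R := ℚ) (k+1) (f * (C (R := ℚ) a - C (R := ℚ) (2*b) * X)) = a * coeff (R := ℚ) (k+1) f - 2*b * coeff (R := ℚ) k f := by
  rw [mul_sub, map_sub, coeff_mul_C,
    show f * (C (R := ℚ) (2*b) * X) = (C (R := ℚ) (2*b) * f) * X by ring, coeff_succ_mul_X, coeff_C_mul]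
  ring

lemma key1 (a b : ℚ) (i k : ℕ) :
    ((k:ℚ)+2) * coeff (R := ℚ) (k+2) (gg a b ^ (i+1)) =
      ((i:ℚ)+1) * (a * coeff (R := ℚ) (k+1) (gg a b ^ i) - 2*b * coeff (R := ℚ) k (gg a b ^ i)) := by
  have h : d⁄dX ℚ (gg a b ^ (i+1)) = (i+1) • gg a b ^ i • d⁄dX ℚ (gg a b) := by
    simpa using Derivation.leibniz_pow (D := d⁄dX ℚ) (a := gg a b) (i+1)
  have h2 := congrArg (coeff (R := ℚ) (k+1)) h
  rw [coeff_derivative, dgg, smul_eq_mul, nsmul_eq_mul,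
    (map_natCast (C (R := ℚ)) (i+1)).symm, coeff_C_mul, expandDg] at h2
  push_cast at h2
  linear_combination h2

lemma keyE (a b : ℚ) (k : ℕ) :
    ((k:ℚ)+2) * coeff (R := ℚ) (k+2) (EE a b) =
      a * coeff (R := ℚ) (k+1) (EE a b) - 2*b * coeff (R := ℚ) k (EE a b) := by
  rw [coeff_EE, coeff_EE, coeff_EE, Finset.mul_sum]
  rw [Finset.sum_range_succ' (fun i => ((k:ℚ)+2) * ((1 / i.factorial : ℚ) * coeff (R := ℚ) (k+2) (gg a b ^ i))) (k+2)]
  have h0 : coeff (R := ℚ) (k+2) (gg a b ^ 0) = 0 := by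
    simp [coeff_one]
  rw [h0]
  have step : ∀ i ∈ range (k+2),
      ((k:ℚ)+2) * ((1 / (i+1).factorial : ℚ) * coeff (R := ℚ) (k+2) (gg a b ^ (i+1)))
        = a * ((1 / i.factorial : ℚ) * coeff (R := ℚ) (k+1) (gg a b ^ i))
          - 2*b * ((1 / i.factorial : ℚ) * coeff (R := ℚ) k (gg a b ^ i)) := by
    intro i _
    have h1 := key1 a b i k
    have hf : ((i+1).factorial : ℚ) = ((i:ℚ)+1) * i.factorial := by
      rw [Nat.factorial_succ]; push_cast; ring
    have hne : (i.factorial : ℚ) ≠ 0 := Nat.cast_ne_zero.mpr i.factorial_ne_zero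
    have hne1 : ((i:ℚ)+1) ≠ 0 := by positivity
    rw [hf]
    field_simp
    linear_combination h1
  rw [Finset.sum_congr rfl step]
  rw [Finset.sum_sub_distrib, ← Finset.mul_sum, ← Finset.mul_sum]
  rw [Finset.sum_range_succ (fun i => (1 / i.factorial : ℚ) * coeff (R := ℚ) k (gg a b ^ i)) (k+1)]
  rw [coeff_gg_pow_of_lt a b (by omega)]
  ring

lemma coeff_one_EE (a b : ℚ) : coeff (R := ℚ) 1 (EE a b) = a := by
  rw [coeff_EE]
  simp [Finset.sum_range_succ, gg, coeff_one, coeff_X_pow]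

lemma constantCoeff_EE (a b : ℚ) : constantCoeff (R := ℚ) (EE a b) = 1 := by
  rw [← coeff_zero_eq_constantCoeff, coeff_EE]
  simp

lemma hDE (a b : ℚ) : d⁄dX ℚ (EE a b) = (C (R := ℚ) a - C (R := ℚ) (2*b) * X) * EE a b := by
  ext n
  rcases n with _ | n
  · rw [coeff_derivative, coeff_one_EE, coeff_zero_eq_constantCoeff]
    simp [constantCoeff_EE]
  · rw [coeff_derivative, mul_comm (C (R := ℚ) a - C (R := ℚ) (2*b) * X), expandDg]
    push_cast
    linear_combination keyE a b n

lemma hMain (a b : ℚ) (S : ℚ⟦X⟧) (hS : S ^ 2 = 1 - X) :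
    (1 - X) * d⁄dX ℚ (S * EE a b) =
      (C (R := ℚ) a - C (R := ℚ) (1/2) + (- C (R := ℚ) (2*b) - C (R := ℚ) a) * X + C (R := ℚ) (2*b) * X^2) * (S * EE a b) := by
  have h1 : d⁄dX ℚ (S * EE a b) = S * d⁄dX ℚ (EE a b) + EE a b * d⁄dX ℚ S := by
    rw [Derivation.leibniz, smul_eq_mul, smul_eq_mul]
  have h2 := hDE a b
  have h4 : S * d⁄dX ℚ S = - C (R := ℚ) (1/2) := by
    have h := congrArg (d⁄dX ℚ) hS
    rw [Derivation.leibniz_pow, Derivation.map_sub, derivative_X] at h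
    simp only [nsmul_eq_mul, smul_eq_mul, pow_one, Nat.cast_ofNat, map_one_eq_zero,
      zero_sub] at h
    norm_num at h
    have hhalf : (C (R := ℚ) (1/2) : ℚ⟦X⟧) * 2 = 1 := by
      rw [show (2:ℚ⟦X⟧) = C (R := ℚ) 2 from (map_ofNat (C (R := ℚ)) 2).symm, ← map_mul]
      norm_num
    linear_combination (C (R := ℚ) (1/2:ℚ)) * h - (S * d⁄dX ℚ S) * hhalf
  linear_combination (1-X) * h1 + (1-X) * S * h2 - EE a b * (d⁄dX ℚ S) * hS + (S * EE a b) * h4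

lemma hrec (a b : ℚ) (S : ℚ⟦X⟧) (hS : S ^ 2 = 1 - X) (k : ℕ) :
    ((k:ℚ)+3) * coeff (R := ℚ) (k+3) (S * EE a b) =
      ((k:ℚ)+2+a-1/2) * coeff (R := ℚ) (k+2) (S * EE a b)
        - (2*b+a) * coeff (R := ℚ) (k+1) (S * EE a b) + 2*b * coeff (R := ℚ) k (S * EE a b) := by
  have hc := congrArg (coeff (R := ℚ) (k+2)) (hMain a b S hS)
  set F := S * EE a b with hF
  rw [show (1 - X) * d⁄dX ℚ F = d⁄dX ℚ F - (d⁄dX ℚ F) * X by ring] at hc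
  rw [show (C (R := ℚ) a - C (R := ℚ) (1/2) + (- C (R := ℚ) (2*b) - C (R := ℚ) a) * X + C (R := ℚ) (2*b) * X^2) * F
      = (C (R := ℚ) a * F - C (R := ℚ) (1/2) * F - (C (R := ℚ) (2*b) * (F * X) + C (R := ℚ) a * (F * X)))
        + C (R := ℚ) (2*b) * (X^2 * F) by ring] at hc
  rw [map_sub, map_add, map_sub, map_sub, map_add, coeff_succ_mul_X, coeff_derivative,
    coeff_derivative, coeff_C_mul, coeff_C_mul, coeff_C_mul, coeff_C_mul,
    coeff_succ_mul_X, coeff_C_mul, coeff_X_pow_mul F 2 k] at hc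
  push_cast at hc
  linear_combination hc

/-- the Ehrhart polynomials of the partial permutohedra satisfy the
three-term recurrence
`E_m = (mt+nt-t+1)E_{m-1} - (m-1)(nt+t/2+3/2)t·E_{m-2} + (m-1)(m-2)t²E_{m-3}/2`,
valid whenever `n ≥ m-1` (so that all four polytopes involved satisfy the condition). -/
theorem ehrhart_partialPermutohedron_recurrence (m n : ℕ) (hm : 3 ≤ m) (hn : m ≤ n + 1)
    (t : ℚ) (ht : t ≠ 0)
    (S : PowerSeries ℚ) (hS : S ^ 2 = 1 - PowerSeries.X)
    (hS0 : PowerSeries.constantCoeff (R := ℚ) S = 1) :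
    ehrExpr S n t m =
      ((m : ℚ) * t + n * t - t + 1) * ehrExpr S n t (m - 1)
        - ((m : ℚ) - 1) * ((n : ℚ) * t + t / 2 + 3 / 2) * t * ehrExpr S n t (m - 2)
        + ((m : ℚ) - 1) * ((m : ℚ) - 2) * t ^ 2 * ehrExpr S n t (m - 3) / 2 := by
  obtain ⟨k, rfl⟩ : ∃ k, m = k + 3 := ⟨m - 3, by omega⟩
  have e1 : k + 3 - 1 = k + 2 := by omega
  have e2 : k + 3 - 2 = k + 1 := by omega
  have e3 : k + 3 - 3 = k := by omega
  rw [e1, e2, e3]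
  have hE : ∀ j, ehrExpr S n t j
      = j.factorial * t^j * coeff (R := ℚ) j (S * EE ((n:ℚ)+1/2+1/t) (1/(4*t))) := fun j => rfl
  rw [hE, hE, hE, hE]
  have h := hrec ((n:ℚ)+1/2+1/t) (1/(4*t)) S hS k
  set f3 := coeff (R := ℚ) (k+3) (S * EE ((n:ℚ)+1/2+1/t) (1/(4*t)))
  set f2 := coeff (R := ℚ) (k+2) (S * EE ((n:ℚ)+1/2+1/t) (1/(4*t)))
  set f1 := coeff (R := ℚ) (k+1) (S * EE ((n:ℚ)+1/2+1/t) (1/(4*t)))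
  set f0 := coeff (R := ℚ) k (S * EE ((n:ℚ)+1/2+1/t) (1/(4*t)))
  have hu : t * (1/t) = 1 := by field_simp
  have hv : 4 * t * (1/(4*t)) = 1 := by field_simp
  have F1 : ((k+1).factorial : ℚ) = ((k:ℚ)+1) * k.factorial := by
    rw [Nat.factorial_succ]; push_cast; ring
  have F2 : ((k+2).factorial : ℚ) = ((k:ℚ)+2) * (((k:ℚ)+1) * k.factorial) := by
    rw [Nat.factorial_succ, Nat.factorial_succ]; push_cast; ring
  have F3 : ((k+3).factorial : ℚ)
      = ((k:ℚ)+3) * (((k:ℚ)+2) * (((k:ℚ)+1) * k.factorial)) := by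
    rw [Nat.factorial_succ, Nat.factorial_succ, Nat.factorial_succ]; push_cast; ring
  rw [F1, F2, F3]
  push_cast
  set K := (k.factorial : ℚ)
  set W := ((k:ℚ)+2) * (((k:ℚ)+1) * K) * t^k
  linear_combination (W * t^3) * h + (W * t^2 * (f2 - f1)) * hu
    + (W * t^2 / 2 * (f0 - f1)) * hv
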